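/- Let Λ = M ⊕ Zk ⊕ Zℓ with M even unimodular of even rank, k² = −2d, ℓ² = −2t. Let β ∈ Λ be a primitive vector with β² < 0 and β² | 2·div(β), such that the induced isometry of r_β on A_Λ ≅ Z/2dZ × Z/2tZ equals −id. Then β² = −2td, gcd(t, d) = 1, and 2td divides both β·k and β·ℓ. -/

import Mathlib

/-!
STATEMENT 16. Same setting as Statement 13 (with `M` moreover of even rank): `Λ = M ⊕ ℤk ⊕ ℤℓ`, `M` even unimodular,
`k² = -2d`, `ℓ² = -2t`; `β = a•m + b•k + c•ℓ` primitive (`gcd(a,b,c) = 1`, `m2 = m²` even),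
`β² = a² m2 - 2d b² - 2t c² < 0`, `div(β) = gcd(a, 2d b, 2t c)`, and `β² ∣ 2 div(β)`.
Assume the induced action of `r_β` on `A_Λ ≅ ℤ/2d × ℤ/2t`, namely the matrix
`[[1 + 4db²/β², 4dbc/β²], [4tbc/β², 1 + 4tc²/β²]]`, equals `-id = diag(-1, -1)`.
Then `β² = -2td`, `gcd(t, d) = 1`, and `2td` divides both `β·k = -2d b` and `β·ℓ = -2t c`.
-/
theorem stmt_16 (t d a b c m2 β2 D : ℤ) (ht : 0 < t) (hd : 0 < d)
    (hprim : Int.gcd (Int.gcd a b) c = 1) (heven : 2 ∣ m2)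
    (hβ2 : β2 = a ^ 2 * m2 - 2 * d * b ^ 2 - 2 * t * c ^ 2) (hneg : β2 < 0)
    (hD : D = Int.gcd (Int.gcd a (2 * d * b)) (2 * t * c))
    (hrefl : β2 ∣ 2 * D)
    (e₁₁ e₁₂ e₂₁ e₂₂ : ℤ)
    (he₁₁ : β2 * e₁₁ = 4 * d * b ^ 2) (he₁₂ : β2 * e₁₂ = 4 * d * b * c)
    (he₂₁ : β2 * e₂₁ = 4 * t * b * c) (he₂₂ : β2 * e₂₂ = 4 * t * c ^ 2)
    (hs₁₁ : 1 + e₁₁ ≡ -1 [ZMOD 2 * d]) (hs₁₂ : e₁₂ ≡ 0 [ZMOD 2 * d])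
    (hs₂₁ : e₂₁ ≡ 0 [ZMOD 2 * t]) (hs₂₂ : 1 + e₂₂ ≡ -1 [ZMOD 2 * t]) :
    β2 = -(2 * t * d) ∧ Int.gcd t d = 1 ∧ (2 * t * d) ∣ -(2 * d * b) ∧ (2 * t * d) ∣ -(2 * t * c) := by
  have hd0 : (2*d : ℤ) ≠ 0 := by positivity
  have ht0 : (2*t : ℤ) ≠ 0 := by positivity
  set N : ℤ := -β2 with hNdef
  have hNpos : 0 < N := by rw [hNdef]; linarith
  have hN0 : N ≠ 0 := ne_of_gt hNpos
  -- extract witnesses from the congruences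
  obtain ⟨x, hx⟩ : ∃ x, e₁₁ = -2 - 2*d*x := by
    obtain ⟨x, hx⟩ := hs₁₁.dvd
    exact ⟨x, by linarith⟩
  obtain ⟨y, hy⟩ : ∃ y, e₂₂ = -2 - 2*t*y := by
    obtain ⟨y, hy⟩ := hs₂₂.dvd
    exact ⟨y, by linarith⟩
  obtain ⟨u, hu⟩ : ∃ u, e₁₂ = -(2*d*u) := by
    obtain ⟨u, hu⟩ := hs₁₂.dvd
    exact ⟨u, by linarith⟩
  -- main multiplicative identities
  have hA : N * (1 + d*x) = 2*d*b^2 := by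
    refine mul_left_cancel₀ two_ne_zero ?_
    have he : β2 * (-2 - 2*d*x) = 4 * d * b^2 := hx ▸ he₁₁
    linear_combination he - (2 + 2*d*x) * hNdef
  have hB : N * (1 + t*y) = 2*t*c^2 := by
    refine mul_left_cancel₀ two_ne_zero ?_
    have he : β2 * (-2 - 2*t*y) = 4 * t * c^2 := hy ▸ he₂₂
    linear_combination he - (2 + 2*t*y) * hNdef
  have hC : N * u = 2*b*c := by
    refine mul_left_cancel₀ hd0 ?_
    have he : β2 * (-(2*d*u)) = 4 * d * b * c := hu ▸ he₁₂
    linear_combination he - 2*d*u * hNdef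
  have hNa : N ∣ 2*a := by
    have hDa : D ∣ a := by
      rw [hD]; exact dvd_trans (Int.gcd_dvd_left _ _) (Int.gcd_dvd_left _ _)
    exact dvd_trans (neg_dvd.mpr hrefl) (mul_dvd_mul_left 2 hDa)
  obtain ⟨s, hs2a⟩ : ∃ s, 2*a = N*s := hNa
  have hw : a^2*m2 = N*(d*x + t*y + 1) := by
    linear_combination -hβ2 - hA - hB + hNdef
  obtain ⟨m', hm'⟩ : ∃ m', m2 = 2*m' := heven
  have hwasm : d*x + t*y + 1 = a*(s*m') := by
    have h1 : N*(2*(d*x+t*y+1)) = N*(2*(a*(s*m'))) := by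
      linear_combination -2*hw + (a*m2)*hs2a + a*N*s*hm'
    have := mul_left_cancel₀ hN0 h1
    linarith
  -- Bezout for three integers
  obtain ⟨al, be, ga, hbez⟩ : ∃ al be ga : ℤ, a*al + b*be + c*ga = 1 := by
    refine ⟨Int.gcdA a b * Int.gcdA (↑(Int.gcd a b)) c,
            Int.gcdB a b * Int.gcdA (↑(Int.gcd a b)) c,
            Int.gcdB (↑(Int.gcd a b)) c, ?_⟩
    have g1 := Int.gcd_eq_gcd_ab a b
    have g2 := Int.gcd_eq_gcd_ab ((Int.gcd a b : ℤ)) c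
    have hp : ((Int.gcd (↑(Int.gcd a b)) c : ℕ) : ℤ) = 1 := by exact_mod_cast hprim
    linear_combination (-(Int.gcdA (↑(Int.gcd a b)) c)) * g1 - g2 + hp
  -- Step I: t and d are coprime
  have hcop : Int.gcd t d = 1 := by
    by_contra hg
    obtain ⟨p, pp, hpg⟩ := Nat.exists_prime_and_dvd hg
    have hpt : (p:ℤ) ∣ t := dvd_trans (Int.natCast_dvd_natCast.mpr hpg) (Int.gcd_dvd_left _ _)
    have hpd : (p:ℤ) ∣ d := dvd_trans (Int.natCast_dvd_natCast.mpr hpg) (Int.gcd_dvd_right _ _)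
    have ppz : Prime (p:ℤ) := Nat.prime_iff_prime_int.1 pp
    have hpX : ¬ (p:ℤ) ∣ (1 + d*x) := by
      intro h
      have h1 : (p:ℤ) ∣ 1 := by
        have h2 : (p:ℤ) ∣ d*x := hpd.mul_right x
        simpa using dvd_sub h h2
      exact ppz.not_isUnit (isUnit_of_dvd_one h1)
    have hpw : ¬ (p:ℤ) ∣ (d*x + t*y + 1) := by
      intro h
      have h1 : (p:ℤ) ∣ 1 := by
        have h2 : (p:ℤ) ∣ d*x + t*y := dvd_add (hpd.mul_right x) (hpt.mul_right y)
        simpa using dvd_sub h h2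
      exact ppz.not_isUnit (isUnit_of_dvd_one h1)
    have hpa : ¬ (p:ℤ) ∣ a := by
      intro h
      exact hpw (by rw [hwasm]; exact h.mul_right (s*m'))
    rcases eq_or_ne p 2 with h2 | hodd
    · subst h2
      obtain ⟨d', hd'⟩ := hpd
      push_cast at hd' hpX hpa
      have h4 : (4:ℤ) ∣ N * (1 + d*x) := by
        rw [hA]; exact ⟨d'*b^2, by rw [hd']; ring⟩
      have h2N : (2:ℤ) ∣ N := by
        have h2' : (2:ℤ) ∣ N * (1+d*x) := dvd_trans ⟨2, by norm_num⟩ h4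
        exact (Int.prime_two.dvd_mul.mp h2').resolve_right hpX
      obtain ⟨N₁, hN₁⟩ := h2N
      obtain ⟨k, hk⟩ := h4
      have hz : N₁*(1+d*x) = 2*k := by
        refine mul_left_cancel₀ two_ne_zero ?_
        linear_combination hk - (1+d*x) * hN₁
      have h2N1 : (2:ℤ) ∣ N₁ := by
        have : (2:ℤ) ∣ N₁ * (1+d*x) := ⟨k, hz⟩
        exact (Int.prime_two.dvd_mul.mp this).resolve_right hpX
      obtain ⟨N₂, hN₂⟩ := h2N1
      have h2a : (2:ℤ) ∣ a := by
        obtain ⟨q, hq⟩ : (4:ℤ) ∣ 2*a := by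
          rw [hs2a, hN₁, hN₂]; exact ⟨N₂*s, by ring⟩
        exact ⟨q, by linarith⟩
      exact hpa h2a
    · have hpN : (p:ℤ) ∣ N := by
        have hdvd : (p:ℤ) ∣ N * (1 + d*x) := by
          rw [hA]; exact (hpd.mul_left 2).mul_right (b^2)
        exact (ppz.dvd_mul.mp hdvd).resolve_right hpX
      have h2a : (p:ℤ) ∣ 2*a := hs2a ▸ hpN.mul_right s
      rcases ppz.dvd_mul.mp h2a with h2 | ha
      · have : p ∣ 2 := by exact_mod_cast h2
        exact hodd ((Nat.prime_dvd_prime_iff_eq pp Nat.prime_two).mp this)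
      · exact hpa ha
  -- Step II : N divides 2td
  have hN2td : N ∣ 2*t*d := by
    refine ⟨s*(t*d*al*((a*al+b*be+c*ga)^2 + (a*al+b*be+c*ga)*(b*be+c*ga) + (b*be+c*ga)^2))
      + (1+d*x)*(t*b*be^3 + 3*t*c*be^2*ga) + (1+t*y)*(3*d*b*be*ga^2 + d*c*ga^3), ?_⟩
    have key : 2*t*d = 2*t*d*(a*al+b*be+c*ga)^3 := by rw [hbez]; ring
    rw [key]
    linear_combination (t*d*al*((a*al+b*be+c*ga)^2 + (a*al+b*be+c*ga)*(b*be+c*ga) + (b*be+c*ga)^2)) * hs2a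
      - (t*b*be^3 + 3*t*c*be^2*ga) * hA - (3*d*b*be*ga^2 + d*c*ga^3) * hB
  obtain ⟨ρ, hρ⟩ := hN2td
  have h2td : (0:ℤ) < 2*t*d := by positivity
  have hρpos : 0 < ρ := by
    by_contra h
    push_neg at h
    have : N*ρ ≤ 0 := mul_nonpos_of_nonneg_of_nonpos hNpos.le h
    linarith
  have htX : t*(1+d*x) = ρ*b^2 := by
    refine mul_left_cancel₀ hN0 ?_
    linear_combination t*hA + b^2*hρ
  have hdY : d*(1+t*y) = ρ*c^2 := by
    refine mul_left_cancel₀ hN0 ?_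
    linear_combination d*hB + c^2*hρ
  -- Step III : ρ = 1
  have hρ1 : ρ = 1 := by
    by_contra hne
    have hna : ρ.natAbs ≠ 1 := by omega
    obtain ⟨p, pp, hpρ⟩ := Int.exists_prime_and_dvd hna
    by_cases hpt : p ∣ t
    · have hpd : ¬ p ∣ d := by
        intro h
        have h1 : p ∣ (1:ℤ) := by
          have := Int.dvd_coe_gcd hpt h
          rw [hcop] at this
          exact_mod_cast this
        exact pp.not_isUnit (isUnit_of_dvd_one h1)
      have hY : ¬ p ∣ (1 + t*y) := by
        intro h
        have h1 : p ∣ (1:ℤ) := by simpa using dvd_sub h (hpt.mul_right y)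
        exact pp.not_isUnit (isUnit_of_dvd_one h1)
      have hdvd : p ∣ d*(1+t*y) := hdY ▸ hpρ.mul_right (c^2)
      rcases pp.dvd_mul.mp hdvd with h | h
      · exact hpd h
      · exact hY h
    · by_cases hpd : p ∣ d
      · have hX : ¬ p ∣ (1 + d*x) := by
          intro h
          have h1 : p ∣ (1:ℤ) := by simpa using dvd_sub h (hpd.mul_right x)
          exact pp.not_isUnit (isUnit_of_dvd_one h1)
        have hdvd : p ∣ t*(1+d*x) := htX ▸ hpρ.mul_right (b^2)
        rcases pp.dvd_mul.mp hdvd with h | h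
        · exact hpt h
        · exact hX h
      · -- p divides neither t nor d, so p = ±2
        have hp2td : p ∣ 2*t*d := hρ ▸ hpρ.mul_left N
        have hp2 : p ∣ 2 := by
          rcases pp.dvd_mul.mp hp2td with h | h
          · rcases pp.dvd_mul.mp h with h' | h'
            · exact h'
            · exact absurd h' hpt
          · exact absurd h hpd
        have h2p : (2:ℤ) ∣ p := by
          have hab : p.natAbs = 2 := by
            have h1 : p.natAbs ∣ 2 := by
              have := Int.natAbs_dvd_natAbs.mpr hp2
              simpa using this
            have hnp : Nat.Prime p.natAbs := Int.prime_iff_natAbs_prime.mp pp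
            exact (Nat.prime_dvd_prime_iff_eq hnp Nat.prime_two).mp h1
          rcases Int.natAbs_eq p with h | h
          · rw [h, hab]; norm_num
          · rw [h, hab]; norm_num
        have h2ρ : (2:ℤ) ∣ ρ := h2p.trans hpρ
        have h2t : ¬ (2:ℤ) ∣ t := fun h => hpt (hp2.trans h)
        have h2d : ¬ (2:ℤ) ∣ d := fun h => hpd (hp2.trans h)
        have h2X : (2:ℤ) ∣ (1+d*x) := by
          have hdvd : (2:ℤ) ∣ t*(1+d*x) := htX ▸ h2ρ.mul_right (b^2)
          exact (Int.prime_two.dvd_mul.mp hdvd).resolve_left h2t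
        have h2Y : (2:ℤ) ∣ (1+t*y) := by
          have hdvd : (2:ℤ) ∣ d*(1+t*y) := hdY ▸ h2ρ.mul_right (c^2)
          exact (Int.prime_two.dvd_mul.mp hdvd).resolve_left h2d
        have h2w : ¬ (2:ℤ) ∣ (d*x + t*y + 1) := by
          intro h
          have h2' := dvd_sub (dvd_sub h h2X) h2Y
          have e : d*x+t*y+1 - (1+d*x) - (1+t*y) = -1 := by ring
          rw [e] at h2'
          norm_num at h2'
        have h2s : ¬ (2:ℤ) ∣ s := by
          intro h
          exact h2w (by rw [hwasm]; exact (h.mul_right m').mul_left a)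
        have h2N : ¬ (2:ℤ) ∣ N := by
          intro h
          obtain ⟨N', hn⟩ := h
          obtain ⟨ρ', hr⟩ := h2ρ
          have h4 : (4:ℤ) ∣ 2*t*d := ⟨N'*ρ', by rw [hρ, hn, hr]; ring⟩
          obtain ⟨k, hk⟩ := h4
          have htd2 : t*d = 2*k := by linarith
          have : (2:ℤ) ∣ t*d := ⟨k, htd2⟩
          rcases Int.prime_two.dvd_mul.mp this with h' | h'
          · exact h2t h'
          · exact h2d h'
        have hNs : (2:ℤ) ∣ N*s := ⟨a, hs2a.symm⟩
        rcases Int.prime_two.dvd_mul.mp hNs with h | h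
        · exact h2N h
        · exact h2s h
  -- Step IV : conclusions
  have hNeq : N = 2*t*d := by rw [hρ1, mul_one] at hρ; exact hρ.symm
  have hgoal1 : β2 = -(2*t*d) := by rw [← hNeq, hNdef]; ring
  rw [hρ1, one_mul] at htX hdY
  have htdu : t*(d*u) = b*c := by
    refine mul_left_cancel₀ two_ne_zero ?_
    linear_combination hC - u*hNeq
  have ha : a = t*(d*s) := by
    refine mul_left_cancel₀ two_ne_zero ?_
    linear_combination hs2a + s*hNeq
  have htb : t ∣ b := by
    have hta : t ∣ a := ⟨d*s, ha⟩
    have htb2 : t ∣ b^2 := ⟨1+d*x, htX.symm⟩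
    have htbc : t ∣ b*c := ⟨d*u, htdu.symm⟩
    have h1 : t ∣ a*(b*al) + (b^2*be + b*c*ga) :=
      dvd_add (hta.mul_right _) (dvd_add (htb2.mul_right _) (htbc.mul_right _))
    have h2 : a*(b*al) + (b^2*be + b*c*ga) = b := by linear_combination b*hbez
    rwa [h2] at h1
  have hdc : d ∣ c := by
    have hda : d ∣ a := ⟨t*s, by linear_combination ha⟩
    have hdc2 : d ∣ c^2 := ⟨1+t*y, hdY.symm⟩
    have hdbc : d ∣ b*c := ⟨t*u, by linear_combination -htdu⟩
    have h1 : d ∣ a*(c*al) + (b*c*be + c^2*ga) :=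
      dvd_add (hda.mul_right _) (dvd_add (hdbc.mul_right _) (hdc2.mul_right _))
    have h2 : a*(c*al) + (b*c*be + c^2*ga) = c := by linear_combination c*hbez
    rwa [h2] at h1
  obtain ⟨b', hb'⟩ := htb
  obtain ⟨c', hc'⟩ := hdc
  exact ⟨by linear_combination hgoal1, hcop, ⟨-b', by rw [hb']; ring⟩, ⟨-c', by rw [hc']; ring⟩⟩
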